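/- arXiv:1410.5406 — 2 statements merged into one kernel-verified Lean document; each statement's English description precedes it below -/
import Mathlib

section
/- Under the weighted measure P_Θ^n on S_n, for distinct cycle lengths m₁ ≠ m₂ with m₁ + m₂ ≤ n, the mixed moment of cycle counts satisfies E_Θ[C_{m₁} C_{m₂}] = (θ_{m₁}/m₁)(θ_{m₂}/m₂) · h_{n−m₁−m₂}/h_n. -/
open Nat Finset

/-- Full cycle type: cycle type together with fixed points as 1-cycles. -/
noncomputable def fullCycleType {n : ℕ} (σ : Equiv.Perm (Fin n)) : Multiset ℕ :=
  σ.cycleType + Multiset.replicate (n - σ.cycleType.sum) 1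

/-- `C_m(σ)`: the number of cycles of length `m` of `σ`. -/
noncomputable def cycleCount {n : ℕ} (σ : Equiv.Perm (Fin n)) (m : ℕ) : ℕ :=
  (fullCycleType σ).count m

set_option linter.unusedSectionVars false

section
variable {α β : Type*} [Fintype α] [DecidableEq α] [Fintype β] [DecidableEq β]

noncomputable def fct (σ : Equiv.Perm α) : Multiset ℕ :=
  σ.cycleType + Multiset.replicate (Fintype.card α - σ.cycleType.sum) 1

lemma cycleType_permCongr (e : α ≃ β) (σ : Equiv.Perm α) :
    (e.permCongr σ).cycleType = σ.cycleType := by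
  classical
  have : e.permCongr σ = σ.extendDomain
      (e.trans (Equiv.subtypeUnivEquiv (fun _ : β => trivial)).symm) := by
    ext x
    rw [Equiv.Perm.extendDomain_apply_subtype _ _ trivial]
    simp [Equiv.subtypeUnivEquiv]
  rw [this, Equiv.Perm.cycleType_extendDomain]

lemma fct_permCongr (e : α ≃ β) (σ : Equiv.Perm α) :
    fct (e.permCongr σ) = fct σ := by
  rw [fct, fct, cycleType_permCongr, Fintype.card_congr e]

lemma sum_fct_transfer (e : α ≃ β) (H : Multiset ℕ → ℝ) :
    ∑ σ : Equiv.Perm α, H (fct σ) = ∑ τ : Equiv.Perm β, H (fct τ) :=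
  Fintype.sum_equiv e.permCongr _ _ (fun σ => by rw [fct_permCongr])

lemma mem_fct {σ : Equiv.Perm α} {a : ℕ}
    (ha : a ∈ fct σ) : 1 ≤ a ∧ a ≤ Fintype.card α := by
  rcases Multiset.mem_add.1 ha with h | h
  · refine ⟨le_trans one_le_two (Equiv.Perm.two_le_of_mem_cycleType h), ?_⟩
    calc a ≤ σ.cycleType.sum := Multiset.single_le_sum (fun x _ => Nat.zero_le x) _ h
    _ = σ.support.card := σ.sum_cycleType
    _ ≤ Fintype.card α := Finset.card_le_univ _
  · have ha1 : a = 1 := Multiset.eq_of_mem_replicate h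
    have : 0 < Fintype.card α - σ.cycleType.sum := by
      by_contra hh
      rw [Multiset.mem_replicate] at h
      omega
    omega

lemma prod_pow_count (θ : ℕ → ℝ) (σ : Equiv.Perm α) :
    ∏ i ∈ Finset.Icc 1 (Fintype.card α), θ i ^ Multiset.count i (fct σ)
      = ((fct σ).map θ).prod := by
  rw [Finset.prod_multiset_map_count]
  refine (Finset.prod_subset ?_ ?_).symm
  · intro a ha
    have := mem_fct (Multiset.mem_toFinset.1 ha)
    exact Finset.mem_Icc.2 ⟨this.1, this.2⟩
  · intro a _ ha
    rw [Multiset.count_eq_zero_of_notMem (fun hc => ha (Multiset.mem_toFinset.2 hc)), pow_zero]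

lemma minPeriod_pos (σ : Equiv.Perm α) (x : α) : 0 < Function.minimalPeriod ⇑σ x := by
  apply Function.minimalPeriod_pos_of_mem_periodicPts
  exact ⟨orderOf σ, orderOf_pos σ, by
    simp only [Function.IsPeriodicPt, Function.IsFixedPt, Equiv.Perm.iterate_eq_pow,
      pow_orderOf_eq_one, Equiv.Perm.one_apply]⟩

lemma minPeriod_eq_card_support_cycleOf (σ : Equiv.Perm α) (x : α) (hx : σ x ≠ x) :
    Function.minimalPeriod ⇑σ x = (σ.cycleOf x).support.card := by
  have hmem : x ∈ (σ.cycleOf x).support := by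
    rw [Equiv.Perm.mem_support_cycleOf_iff]
    exact ⟨Equiv.Perm.SameCycle.refl _ _, Equiv.Perm.mem_support.2 hx⟩
  have key : ∀ k : ℕ, (σ ^ k) x = x ↔ (σ.cycleOf x).support.card ∣ k := by
    intro k
    exact (σ.isCycleOn_support_cycleOf x).pow_apply_eq hmem
  have h1 : (σ.cycleOf x).support.card ∣ Function.minimalPeriod ⇑σ x := by
    rw [← key]
    exact Function.isPeriodicPt_minimalPeriod ⇑σ x
  have h2 : Function.minimalPeriod ⇑σ x ∣ (σ.cycleOf x).support.card := by
    apply Function.IsPeriodicPt.minimalPeriod_dvd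
    exact (key _).2 dvd_rfl
  exact Nat.dvd_antisymm h2 h1

lemma card_filter_minPeriod (σ : Equiv.Perm α) (m : ℕ) (hm : 1 ≤ m) :
    (Finset.univ.filter fun x => Function.minimalPeriod ⇑σ x = m).card
      = m * Multiset.count m (fct σ) := by
  classical
  rcases eq_or_lt_of_le hm with h1 | h2
  · -- m = 1 : fixed points
    subst h1
    have hfix : (Finset.univ.filter fun x => Function.minimalPeriod ⇑σ x = 1)
        = σ.supportᶜ := by
      ext x
      simp only [Finset.mem_filter, Finset.mem_univ, true_and, Finset.mem_compl,
        Equiv.Perm.mem_support, not_not]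
      rw [Function.minimalPeriod_eq_one_iff_isFixedPt]
      rfl
    rw [hfix, Finset.card_compl]
    have hc1 : Multiset.count 1 σ.cycleType = 0 := by
      rw [Multiset.count_eq_zero]
      intro hmem
      exact absurd (Equiv.Perm.two_le_of_mem_cycleType hmem) (by norm_num)
    rw [fct, Multiset.count_add, hc1, Multiset.count_replicate]
    simp [σ.sum_cycleType]
  · -- 2 ≤ m
    have hcnt : Multiset.count m (fct σ) = Multiset.count m σ.cycleType := by
      rw [fct, Multiset.count_add, Multiset.count_replicate, if_neg (by omega)]
      omega
    have hset : (Finset.univ.filter fun x => Function.minimalPeriod ⇑σ x = m)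
        = (σ.cycleFactorsFinset.filter fun c => c.support.card = m).biUnion
            Equiv.Perm.support := by
      ext x
      simp only [Finset.mem_filter, Finset.mem_univ, true_and, Finset.mem_biUnion]
      constructor
      · intro hx
        have hxfix : σ x ≠ x := by
          intro hfx
          rw [(Function.minimalPeriod_eq_one_iff_isFixedPt).2 hfx] at hx
          omega
        refine ⟨σ.cycleOf x, ⟨?_, ?_⟩, ?_⟩
        · exact Equiv.Perm.cycleOf_mem_cycleFactorsFinset_iff.2 (Equiv.Perm.mem_support.2 hxfix)
        · rw [← minPeriod_eq_card_support_cycleOf σ x hxfix]; exact hx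
        · rw [Equiv.Perm.mem_support_cycleOf_iff]
          exact ⟨Equiv.Perm.SameCycle.refl _ _, Equiv.Perm.mem_support.2 hxfix⟩
      · rintro ⟨c, hc, hxc⟩
        have hcx : c = σ.cycleOf x := Equiv.Perm.cycle_is_cycleOf hxc hc.1
        have hxfix : σ x ≠ x := by
          have hsupp := (Equiv.Perm.mem_cycleFactorsFinset_iff.1 hc.1).2 x hxc
          have : c x ≠ x := Equiv.Perm.mem_support.1 hxc
          rwa [hsupp] at this
        rw [minPeriod_eq_card_support_cycleOf σ x hxfix, ← hcx]
        exact hc.2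
    rw [hset, hcnt, Finset.card_biUnion, Equiv.Perm.cycleType_def, Multiset.count_map]
    · have : ∀ c ∈ σ.cycleFactorsFinset.filter fun c => c.support.card = m,
          c.support.card = m := fun c hc => (Finset.mem_filter.1 hc).2
      rw [Finset.sum_congr rfl this, Finset.sum_const, smul_eq_mul, mul_comm]
      congr 1
      rw [Finset.card_def, Finset.filter_val]
      congr 1
      apply Multiset.filter_congr
      intro d _
      simp [eq_comm, Function.comp]
    · intro c hc d hd hcd
      have := σ.cycleFactorsFinset_pairwise_disjoint (Finset.mem_filter.1 hc).1
        (Finset.mem_filter.1 hd).1 hcd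
      exact Equiv.Perm.disjoint_iff_disjoint_support.1 this
end

section Build
variable {α : Type*} [Fintype α] [DecidableEq α] {m : ℕ}

noncomputable def orbEquiv (f : Fin m ↪ α) :
    Fin m ≃ {y : α // y ∈ Finset.image ⇑f Finset.univ} :=
  Equiv.ofBijective (fun i => ⟨f i, Finset.mem_image_of_mem _ (Finset.mem_univ i)⟩)
    ⟨fun a b hab => f.injective (congrArg Subtype.val hab),
     fun y => by obtain ⟨i, -, hi⟩ := Finset.mem_image.1 y.2; exact ⟨i, Subtype.ext hi⟩⟩

@[simp] lemma orbEquiv_apply (f : Fin m ↪ α) (i : Fin m) :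
    (orbEquiv f i : α) = f i := rfl

noncomputable def buildPerm (f : Fin m ↪ α)
    (τ : Equiv.Perm {y : α // y ∉ Finset.image ⇑f Finset.univ}) : Equiv.Perm α :=
  (finRotate m).extendDomain (orbEquiv f) * Equiv.Perm.ofSubtype τ

lemma buildPerm_apply_mem (f : Fin m ↪ α) (τ) (i : Fin m) :
    buildPerm f τ (f i) = f (finRotate m i) := by
  have h1 : Equiv.Perm.ofSubtype τ (f i) = f i :=
    Equiv.Perm.ofSubtype_apply_of_not_mem τ
      (by simp only [not_not]; exact Finset.mem_image_of_mem _ (Finset.mem_univ i))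
  have h2 : (finRotate m).extendDomain (orbEquiv f) (f i) = f (finRotate m i) := by
    have := Equiv.Perm.extendDomain_apply_image (e := finRotate m) (f := orbEquiv f) i
    simpa using this
  simp only [buildPerm, Equiv.Perm.mul_apply, h1, h2]

lemma buildPerm_apply_not_mem (f : Fin m ↪ α) (τ) (y : α)
    (hy : y ∉ Finset.image ⇑f Finset.univ) :
    buildPerm f τ y = ↑(τ ⟨y, hy⟩) := by
  have h1 : Equiv.Perm.ofSubtype τ y = ↑(τ ⟨y, hy⟩) :=
    Equiv.Perm.ofSubtype_apply_of_mem τ hy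
  have h2 : (finRotate m).extendDomain (orbEquiv f) ↑(τ ⟨y, hy⟩) = ↑(τ ⟨y, hy⟩) :=
    Equiv.Perm.extendDomain_apply_not_subtype _ _ (τ ⟨y, hy⟩).2
  simp only [buildPerm, Equiv.Perm.mul_apply, h1, h2]

lemma card_compl_image (f : Fin m ↪ α) (hm : m ≤ Fintype.card α) :
    Fintype.card {y : α // y ∉ Finset.image ⇑f Finset.univ} = Fintype.card α - m := by
  rw [Fintype.card_subtype]
  have h1 : Finset.univ.filter (fun y => y ∉ Finset.image ⇑f Finset.univ)
      = (Finset.image ⇑f Finset.univ)ᶜ := by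
    ext y; simp
  rw [h1, Finset.card_compl, Finset.card_image_of_injective _ f.injective]
  simp

lemma disjoint_build (f : Fin m ↪ α)
    (τ : Equiv.Perm {y : α // y ∉ Finset.image ⇑f Finset.univ}) :
    Equiv.Perm.Disjoint ((finRotate m).extendDomain (orbEquiv f)) (Equiv.Perm.ofSubtype τ) :=
  fun y => by
    by_cases h : y ∈ Finset.image ⇑f Finset.univ
    · exact Or.inr (Equiv.Perm.ofSubtype_apply_of_not_mem τ (not_not_intro h))
    · exact Or.inl (Equiv.Perm.extendDomain_apply_not_subtype _ _ h)

lemma fct_buildPerm (f : Fin m ↪ α) (τ) (hm : 0 < m) (hcard : m ≤ Fintype.card α) :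
    fct (buildPerm f τ) = m ::ₘ fct τ := by
  have hd := disjoint_build f τ
  have hct : (buildPerm f τ).cycleType = (finRotate m).cycleType + τ.cycleType := by
    rw [buildPerm, Equiv.Perm.Disjoint.cycleType_mul hd, Equiv.Perm.cycleType_extendDomain,
      Equiv.Perm.cycleType_ofSubtype]
  have hcc := card_compl_image f hcard
  have hsum : τ.cycleType.sum ≤ Fintype.card α - m := by
    rw [Equiv.Perm.sum_cycleType, ← hcc]
    exact Finset.card_le_univ _
  rcases eq_or_lt_of_le (show 1 ≤ m from hm) with h1 | h2
  · -- m = 1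
    subst h1
    have hfr1 : finRotate 1 = 1 := Subsingleton.elim _ _
    have hone : 1 ≤ Fintype.card α := hcard
    have harith : Fintype.card α - τ.cycleType.sum
        = (Fintype.card α - 1 - τ.cycleType.sum) + 1 := by omega
    simp only [fct, hct, hfr1, Equiv.Perm.cycleType_one, zero_add, hcc]
    rw [harith, Multiset.replicate_succ, Multiset.add_cons]
  · -- 2 ≤ m
    have hfr : (finRotate m).cycleType = {m} := cycleType_finRotate_of_le h2
    simp only [fct, hct, hfr, hcc, Multiset.singleton_add, Multiset.cons_add,
      Multiset.sum_cons]
    congr 3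
    omega

lemma finRotate_val (hm : 0 < m) (i : Fin m) : (finRotate m i).val = (i.val + 1) % m := by
  obtain ⟨m', rfl⟩ : ∃ m', m = m' + 1 := ⟨m - 1, by omega⟩
  rw [finRotate_succ_apply, Fin.val_add_one]
  split_ifs with h
  · subst h
    simp [Fin.val_last]
  · have : i.val < m' := by
      have := i.isLt
      rcases Nat.lt_succ_iff_lt_or_eq.1 i.isLt with h' | h'
      · exact h'
      · exact absurd (Fin.ext h') h
    rw [Nat.mod_eq_of_lt (by omega)]

lemma buildPerm_pow (f : Fin m ↪ α) (τ) (j : Fin m) (k : ℕ) :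
    ((buildPerm f τ) ^ k) (f j) = f (((finRotate m) ^ k) j) := by
  induction k with
  | zero => simp
  | succ k ih =>
    rw [_root_.pow_succ', Equiv.Perm.mul_apply, ih, buildPerm_apply_mem,
      ← Equiv.Perm.mul_apply, ← _root_.pow_succ']

lemma finRotate_pow_val (hm : 0 < m) (j : Fin m) (k : ℕ) :
    (((finRotate m) ^ k) j).val = (j.val + k) % m := by
  induction k generalizing j with
  | zero => simp [Nat.mod_eq_of_lt j.isLt]
  | succ k ih =>
    rw [pow_succ, Equiv.Perm.mul_apply, ih ((finRotate m) j), finRotate_val hm j,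
      Nat.mod_add_mod]
    congr 1
    omega

lemma minPeriod_buildPerm (f : Fin m ↪ α) (τ) (hm : 0 < m) :
    Function.minimalPeriod ⇑(buildPerm f τ) (f ⟨0, hm⟩) = m := by
  set σ := buildPerm f τ with hσ
  have hpow : ∀ k : ℕ, (σ ^ k) (f ⟨0, hm⟩) = f ⟨k % m, Nat.mod_lt _ hm⟩ := by
    intro k
    rw [buildPerm_pow]
    congr 1
    refine Fin.ext ?_
    rw [finRotate_pow_val hm]
    simp
  have hper : Function.IsPeriodicPt ⇑σ m (f ⟨0, hm⟩) := by
    show (⇑σ)^[m] (f ⟨0, hm⟩) = f ⟨0, hm⟩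
    rw [Equiv.Perm.iterate_eq_pow, hpow]
    congr 1
    exact Fin.ext (by simp)
  have hdvd := hper.minimalPeriod_dvd
  have hpos := minPeriod_pos σ (f ⟨0, hm⟩)
  have hle : Function.minimalPeriod ⇑σ (f ⟨0, hm⟩) ≤ m := Nat.le_of_dvd hm hdvd
  rcases eq_or_lt_of_le hle with h | h
  · exact h
  · exfalso
    have := Function.isPeriodicPt_minimalPeriod ⇑σ (f ⟨0, hm⟩)
    rw [Function.IsPeriodicPt, Function.IsFixedPt, Equiv.Perm.iterate_eq_pow, hpow] at this
    have := congrArg Fin.val (f.injective this)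
    simp only [Nat.mod_eq_of_lt h] at this
    omega

lemma closure_lemma (σ : Equiv.Perm α) (x : α) (hm : 0 < m)
    (hx : Function.minimalPeriod ⇑σ x = m) (f : Fin m → α)
    (hf : ∀ i : Fin m, (σ ^ (i : ℕ)) x = f i) :
    ∀ y, y ∉ Finset.image f Finset.univ ↔ σ y ∉ Finset.image f Finset.univ := by
  have hper : (σ ^ m) x = x := by
    have := Function.isPeriodicPt_minimalPeriod ⇑σ x
    rwa [Function.IsPeriodicPt, Function.IsFixedPt, hx, Equiv.Perm.iterate_eq_pow] at this
  have hmem : ∀ y, y ∈ Finset.image f Finset.univ ↔ ∃ k, k < m ∧ (σ ^ k) x = y := by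
    intro y
    simp only [Finset.mem_image, Finset.mem_univ, true_and]
    constructor
    · rintro ⟨i, rfl⟩
      exact ⟨i.val, i.isLt, hf i⟩
    · rintro ⟨k, hk, rfl⟩
      exact ⟨⟨k, hk⟩, (hf ⟨k, hk⟩).symm⟩
  have key : ∀ y, σ y ∈ Finset.image f Finset.univ ↔ y ∈ Finset.image f Finset.univ := by
    intro y
    rw [hmem, hmem]
    constructor
    · rintro ⟨k, hk, hky⟩
      rcases Nat.eq_zero_or_pos k with rfl | hkpos
      · refine ⟨m - 1, by omega, σ.injective ?_⟩
        rw [← hky]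
        rw [← Equiv.Perm.mul_apply, ← _root_.pow_succ', show m - 1 + 1 = m from by omega,
          hper, pow_zero, Equiv.Perm.one_apply]
      · refine ⟨k - 1, by omega, σ.injective ?_⟩
        rw [← hky, ← Equiv.Perm.mul_apply, ← _root_.pow_succ',
          show k - 1 + 1 = k from by omega]
    · rintro ⟨k, hk, rfl⟩
      refine ⟨(k+1) % m, Nat.mod_lt _ hm, ?_⟩
      have h1 : (σ ^ ((k+1) % m)) x = (σ ^ (k+1)) x := by
        have := Function.iterate_mod_minimalPeriod_eq (f := ⇑σ) (x := x) (n := k + 1)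
        rwa [hx, Equiv.Perm.iterate_eq_pow, Equiv.Perm.iterate_eq_pow] at this
      rw [h1, _root_.pow_succ', Equiv.Perm.mul_apply]
  intro y
  rw [key]

lemma buildPerm_mem_image_iff (f : Fin m ↪ α) (τ) (y : α) :
    buildPerm f τ y ∈ Finset.image ⇑f Finset.univ ↔ y ∈ Finset.image ⇑f Finset.univ := by
  by_cases h : y ∈ Finset.image ⇑f Finset.univ
  · simp only [h, iff_true]
    obtain ⟨i, -, rfl⟩ := Finset.mem_image.1 h
    rw [buildPerm_apply_mem]
    exact Finset.mem_image_of_mem _ (Finset.mem_univ _)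
  · simp only [h, iff_false]
    rw [buildPerm_apply_not_mem f τ y h]
    exact (τ ⟨y, h⟩).2

lemma subtypePerm_buildPerm (f : Fin m ↪ α) (τ) :
    (buildPerm f τ).subtypePerm
      (fun y => (not_congr (buildPerm_mem_image_iff f τ y))) = τ := by
  ext y
  refine congrArg Subtype.val ?_
  refine Subtype.ext ?_
  rw [Equiv.Perm.subtypePerm_apply]
  exact buildPerm_apply_not_mem f τ y.1 y.2

lemma buildPerm_eq (σ : Equiv.Perm α) (x : α) (hm : 0 < m)
    (hx : Function.minimalPeriod ⇑σ x = m) (f : Fin m ↪ α)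
    (hf : ∀ i : Fin m, (σ ^ (i : ℕ)) x = f i) :
    buildPerm f (σ.subtypePerm (fun y => (closure_lemma σ x hm hx ⇑f hf y).symm)) = σ := by
  ext y
  by_cases h : y ∈ Finset.image ⇑f Finset.univ
  · obtain ⟨i, -, rfl⟩ := Finset.mem_image.1 h
    rw [buildPerm_apply_mem]
    rw [← hf i, ← hf (finRotate m i), ← Equiv.Perm.mul_apply, ← _root_.pow_succ']
    rw [finRotate_val hm i]
    have := Function.iterate_mod_minimalPeriod_eq (f := ⇑σ) (x := x) (n := i.val + 1)
    rwa [hx, Equiv.Perm.iterate_eq_pow, Equiv.Perm.iterate_eq_pow] at this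
  · rw [buildPerm_apply_not_mem f _ y h]
    rfl

lemma orbit_inj (σ : Equiv.Perm α) (x : α) (hx : Function.minimalPeriod ⇑σ x = m) :
    Function.Injective (fun i : Fin m => (σ ^ (i : ℕ)) x) := by
  intro a b hab
  have key := Function.iterate_injOn_Iio_minimalPeriod (f := ⇑σ) (x := x)
    (by rw [hx]; exact Set.mem_Iio.2 a.isLt) (by rw [hx]; exact Set.mem_Iio.2 b.isLt)
  refine Fin.ext (key ?_)
  simpa only [Equiv.Perm.iterate_eq_pow] using hab

end Build

theorem core_sum {α : Type*} [Fintype α] [DecidableEq α] (G : Multiset ℕ → ℝ) (m : ℕ)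
    (hm : 0 < m) (hmα : m ≤ Fintype.card α) :
    ∑ σ : Equiv.Perm α, G (fct σ) * ((m * Multiset.count m (fct σ) : ℕ) : ℝ) =
      ((Fintype.card α).descFactorial m : ℝ) *
        ∑ ρ : Equiv.Perm (Fin (Fintype.card α - m)), G (m ::ₘ fct ρ) := by
  classical
  have step1 : ∀ σ : Equiv.Perm α,
      G (fct σ) * ((m * Multiset.count m (fct σ) : ℕ) : ℝ)
        = ∑ x : α, if Function.minimalPeriod ⇑σ x = m then G (fct σ) else 0 := by
    intro σ
    rw [← Finset.sum_filter, Finset.sum_const, card_filter_minPeriod σ m hm,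
      nsmul_eq_mul, mul_comm]
  rw [Finset.sum_congr rfl (fun σ _ => step1 σ)]
  have hpair : (∑ σ : Equiv.Perm α, ∑ x : α,
        if Function.minimalPeriod (⇑σ) x = m then G (fct σ) else 0)
      = ∑ p : Equiv.Perm α × α,
        if Function.minimalPeriod (⇑p.1) p.2 = m then G (fct p.1) else 0 :=
    (Fintype.sum_prod_type (f := fun p : Equiv.Perm α × α =>
      if Function.minimalPeriod (⇑p.1) p.2 = m then G (fct p.1) else 0)).symm
  rw [hpair]
  rw [← Finset.sum_filter]
  set P := Finset.univ.filter
    (fun p : Equiv.Perm α × α => Function.minimalPeriod ⇑p.1 p.2 = m) with hP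
  set Fn : Equiv.Perm α × α → (Fin m → α) := fun p i => (p.1 ^ (i : ℕ)) p.2 with hFn
  set T := Finset.univ.filter (fun g : Fin m → α => Function.Injective g) with hT
  have hmap : ∀ p ∈ P, Fn p ∈ T := by
    intro p hp
    rw [hT, Finset.mem_filter]
    refine ⟨Finset.mem_univ _, ?_⟩
    exact orbit_inj p.1 p.2 ((Finset.mem_filter.1 hp).2)
  rw [← Finset.sum_fiberwise_of_maps_to hmap]
  have fiber : ∀ g ∈ T, ∑ p ∈ P.filter (fun p => Fn p = g), G (fct p.1)
      = ∑ ρ : Equiv.Perm (Fin (Fintype.card α - m)), G (m ::ₘ fct ρ) := by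
    intro g hg
    have hginj : Function.Injective g := (Finset.mem_filter.1 hg).2
    set femb : Fin m ↪ α := ⟨g, hginj⟩ with hfemb
    have main : ∑ p ∈ P.filter (fun p => Fn p = g), G (fct p.1)
        = ∑ τ : Equiv.Perm {y : α // y ∉ Finset.image ⇑femb Finset.univ},
            G (m ::ₘ fct τ) := by
      have hmem : ∀ p ∈ P.filter (fun p => Fn p = g),
          Function.minimalPeriod ⇑p.1 p.2 = m ∧ ∀ i : Fin m, (p.1 ^ (i : ℕ)) p.2 = femb i := by
        intro p hp
        rw [Finset.mem_filter] at hp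
        obtain ⟨hp1, hp2⟩ := hp
        rw [hP, Finset.mem_filter] at hp1
        exact ⟨hp1.2, fun i => congrFun hp2 i⟩
      refine Finset.sum_bij'
        (fun p hp => p.1.subtypePerm
          (fun y => (closure_lemma p.1 p.2 hm (hmem p hp).1 ⇑femb (hmem p hp).2 y).symm))
        (fun τ _ => (buildPerm femb τ, femb ⟨0, hm⟩)) ?_ ?_ ?_ ?_ ?_
      · intro p hp
        exact Finset.mem_univ _
      · intro τ _
        rw [Finset.mem_filter, hP, Finset.mem_filter]
        refine ⟨⟨Finset.mem_univ _, minPeriod_buildPerm femb τ hm⟩, ?_⟩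
        funext i
        show (buildPerm femb τ ^ (i : ℕ)) (femb ⟨0, hm⟩) = g i
        rw [buildPerm_pow]
        have hrot : ((finRotate m ^ (i : ℕ)) (⟨0, hm⟩ : Fin m)) = i := by
          refine Fin.ext ?_
          rw [finRotate_pow_val hm]
          simpa using Nat.mod_eq_of_lt i.isLt
        rw [hrot]
        rfl
      · intro p hp
        refine Prod.ext ?_ ?_
        · exact buildPerm_eq p.1 p.2 hm (hmem p hp).1 femb (hmem p hp).2
        · show femb ⟨0, hm⟩ = p.2
          have := (hmem p hp).2 ⟨0, hm⟩
          rw [← this]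
          simp
      · intro τ hτ
        exact subtypePerm_buildPerm femb τ
      · intro p hp
        have hb := buildPerm_eq p.1 p.2 hm (hmem p hp).1 femb (hmem p hp).2
        conv_lhs => rw [← hb]
        rw [fct_buildPerm femb _ hm hmα]
    rw [main]
    exact sum_fct_transfer
      (Fintype.equivFinOfCardEq (card_compl_image femb hmα)) (fun M => G (m ::ₘ M))
  rw [Finset.sum_congr rfl fiber, Finset.sum_const, nsmul_eq_mul]
  congr 1
  rw [hT]
  norm_cast
  rw [← Fintype.card_subtype]
  rw [Fintype.card_congr (Equiv.subtypeInjectiveEquivEmbedding (Fin m) α)]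
  rw [Fintype.card_embedding_eq, Fintype.card_fin]

theorem core_fin (G : Multiset ℕ → ℝ) (m n : ℕ) (hm : 0 < m) (hmn : m ≤ n) :
    ∑ σ : Equiv.Perm (Fin n), G (fct σ) * ((m * Multiset.count m (fct σ) : ℕ) : ℝ) =
      (n.descFactorial m : ℝ) * ∑ ρ : Equiv.Perm (Fin (n - m)), G (m ::ₘ fct ρ) := by
  have := core_sum (α := Fin n) G m hm (by rwa [Fintype.card_fin])
  rwa [Fintype.card_fin] at this

noncomputable def cycleCount' {n : ℕ} (σ : Equiv.Perm (Fin n)) (m : ℕ) : ℕ :=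
  (fct σ).count m

lemma prod_Icc_eq {j : ℕ} (θ : ℕ → ℝ) (σ : Equiv.Perm (Fin j)) :
    ∏ i ∈ Finset.Icc 1 j, θ i ^ cycleCount' σ i = ((fct σ).map θ).prod := by
  have := prod_pow_count (θ := θ) σ
  rw [Fintype.card_fin] at this
  rw [← this]
  rfl

theorem mixed_moment_cycleCount' (θ : ℕ → ℝ) (h : ℕ → ℝ)
    (hh : ∀ j, h j = ((j ! : ℝ))⁻¹ *
      ∑ σ : Equiv.Perm (Fin j), ∏ i ∈ Finset.Icc 1 j, θ i ^ cycleCount' σ i)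
    (n m₁ m₂ : ℕ) (hm₁ : 1 ≤ m₁) (hm₂ : 1 ≤ m₂) (hne : m₁ ≠ m₂)
    (hsum : m₁ + m₂ ≤ n) (hn : h n ≠ 0) :
    (1 / (h n * (n ! : ℝ))) *
        ∑ σ : Equiv.Perm (Fin n),
          (∏ i ∈ Finset.Icc 1 n, θ i ^ cycleCount' σ i) *
            ((cycleCount' σ m₁ : ℝ) * (cycleCount' σ m₂ : ℝ))
      = (θ m₁ / m₁) * (θ m₂ / m₂) * h (n - m₁ - m₂) / h n := by
  classical
  set W : Multiset ℕ → ℝ := fun M => (M.map θ).prod with hWdef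
  set S := ∑ σ : Equiv.Perm (Fin n),
      (∏ i ∈ Finset.Icc 1 n, θ i ^ cycleCount' σ i) *
        ((cycleCount' σ m₁ : ℝ) * (cycleCount' σ m₂ : ℝ)) with hSdef
  have hS : (m₁ : ℝ) * m₂ * S
      = ∑ σ : Equiv.Perm (Fin n),
          (W (fct σ) * ((m₂ * Multiset.count m₂ (fct σ) : ℕ) : ℝ))
            * ((m₁ * Multiset.count m₁ (fct σ) : ℕ) : ℝ) := by
    rw [hSdef, Finset.mul_sum]
    refine Finset.sum_congr rfl (fun σ _ => ?_)
    rw [prod_Icc_eq θ σ]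
    show (m₁ : ℝ) * m₂ * (W (fct σ) * _) = _
    push_cast
    unfold cycleCount'
    ring
  have h1 := core_fin (fun M => W M * ((m₂ * Multiset.count m₂ M : ℕ) : ℝ)) m₁ n
    (by omega) (by omega)
  have hsimp1 : ∀ ρ : Equiv.Perm (Fin (n - m₁)),
      W (m₁ ::ₘ fct ρ) * ((m₂ * Multiset.count m₂ (m₁ ::ₘ fct ρ) : ℕ) : ℝ)
        = (θ m₁ * W (fct ρ)) * ((m₂ * Multiset.count m₂ (fct ρ) : ℕ) : ℝ) := by
    intro ρ
    rw [hWdef]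
    show ((m₁ ::ₘ fct ρ).map θ).prod * _ = _
    rw [Multiset.map_cons, Multiset.prod_cons,
      Multiset.count_cons_of_ne (Ne.symm hne)]
  have h2 := core_fin (fun M => θ m₁ * W M) m₂ (n - m₁) (by omega) (by omega)
  have hsimp2 : ∀ ρ : Equiv.Perm (Fin (n - m₁ - m₂)),
      θ m₁ * W (m₂ ::ₘ fct ρ) = θ m₁ * θ m₂ * W (fct ρ) := by
    intro ρ
    rw [hWdef]
    show θ m₁ * ((m₂ ::ₘ fct ρ).map θ).prod = _
    rw [Multiset.map_cons, Multiset.prod_cons]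
    ring
  have hhr : ∑ ρ : Equiv.Perm (Fin (n - m₁ - m₂)), W (fct ρ)
      = ((n - m₁ - m₂)! : ℝ) * h (n - m₁ - m₂) := by
    have hfne : ((n - m₁ - m₂)! : ℝ) ≠ 0 := Nat.cast_ne_zero.2 (Nat.factorial_ne_zero _)
    rw [hh (n - m₁ - m₂),
      Finset.sum_congr rfl (fun ρ _ => prod_Icc_eq θ ρ)]
    field_simp
    rfl
  have hfac : (n.descFactorial m₁ : ℝ) * ((n - m₁).descFactorial m₂) * ((n - m₁ - m₂)!)
      = (n ! : ℝ) := by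
    have e1 : (n - m₁ - m₂)! * (n - m₁).descFactorial m₂ = (n - m₁)! :=
      Nat.factorial_mul_descFactorial (by omega)
    have e2 : (n - m₁)! * n.descFactorial m₁ = n ! :=
      Nat.factorial_mul_descFactorial (by omega)
    push_cast [← e2, ← e1]
    ring
  have key : (m₁ : ℝ) * m₂ * S = (n ! : ℝ) * (θ m₁ * θ m₂ * h (n - m₁ - m₂)) := by
    rw [hS, h1, Finset.sum_congr rfl (fun ρ _ => hsimp1 ρ), h2,
      Finset.sum_congr rfl (fun ρ _ => hsimp2 ρ), ← Finset.mul_sum, hhr, ← hfac]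
    ring
  have hm₁R : (m₁ : ℝ) ≠ 0 := Nat.cast_ne_zero.2 (by omega)
  have hm₂R : (m₂ : ℝ) ≠ 0 := Nat.cast_ne_zero.2 (by omega)
  have hnf : (n ! : ℝ) ≠ 0 := Nat.cast_ne_zero.2 (Nat.factorial_ne_zero _)
  field_simp
  linear_combination key

lemma cycleCount_eq' {j : ℕ} (σ : Equiv.Perm (Fin j)) (m : ℕ) :
    cycleCount σ m = cycleCount' σ m := by
  unfold cycleCount cycleCount' fullCycleType fct
  rw [Fintype.card_fin]

/-- Mixed moment of cycle counts under the weighted measure `P_Θ^n`: for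
`m₁ ≠ m₂` with `m₁ + m₂ ≤ n`,
`E_Θ[C_{m₁} C_{m₂}] = (θ_{m₁}/m₁)(θ_{m₂}/m₂) h_{n-m₁-m₂}/h_n`. -/
theorem mixed_moment_cycleCount (θ : ℕ → ℝ) (hθ : ∀ m, 0 ≤ θ m) (h : ℕ → ℝ)
    (hh : ∀ j, h j = ((j ! : ℝ))⁻¹ *
      ∑ σ : Equiv.Perm (Fin j), ∏ i ∈ Finset.Icc 1 j, θ i ^ cycleCount σ i)
    (n m₁ m₂ : ℕ) (hm₁ : 1 ≤ m₁) (hm₂ : 1 ≤ m₂) (hne : m₁ ≠ m₂)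
    (hsum : m₁ + m₂ ≤ n) (hn : h n ≠ 0) :
    (1 / (h n * (n ! : ℝ))) *
        ∑ σ : Equiv.Perm (Fin n),
          (∏ i ∈ Finset.Icc 1 n, θ i ^ cycleCount σ i) *
            ((cycleCount σ m₁ : ℝ) * (cycleCount σ m₂ : ℝ))
      = (θ m₁ / m₁) * (θ m₂ / m₂) * h (n - m₁ - m₂) / h n := by
  simp only [cycleCount_eq'] at hh ⊢
  exact mixed_moment_cycleCount' θ h hh n m₁ m₂ hm₁ hm₂ hne hsum hn
end

section
/- For σ ∈ S_n, log O_n(σ) = ψ(n) − R_n(σ), where ψ(n) = Σ_{k=1}^n Λ(k) is the Chebyshev function and R_n(σ) = Σ_{k=1}^n Λ(k) 1_{D_{n,k}(σ)=0}, where D_{n,k}(σ) counts (with multiplicity) the cycles of σ whose length is divisible by k. -/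
open Nat Finset

/-- `D_{n,k}(σ) = ∑_{m=1}^n C_m(σ) 1_{k ∣ m}`. -/
noncomputable def Dnk {n : ℕ} (σ : Equiv.Perm (Fin n)) (k : ℕ) : ℕ :=
  ∑ m ∈ Finset.Icc 1 n, cycleCount σ m * (if k ∣ m then 1 else 0)

lemma sum_fullCycleType {n : ℕ} (σ : Equiv.Perm (Fin n)) :
    (fullCycleType σ).sum = n := by
  have h : σ.cycleType.sum ≤ n := by
    rw [Equiv.Perm.sum_cycleType]
    simpa using σ.support.card_le_univ
  simp [fullCycleType, Multiset.sum_replicate]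
  omega

lemma one_le_of_mem_fullCycleType {n : ℕ} (σ : Equiv.Perm (Fin n)) {m : ℕ}
    (hm : m ∈ fullCycleType σ) : 1 ≤ m := by
  rcases Multiset.mem_add.mp hm with h | h
  · exact le_of_lt (one_lt_two.trans_le (Equiv.Perm.two_le_of_mem_cycleType h))
  · simp [Multiset.eq_of_mem_replicate h]

lemma le_of_mem_fullCycleType {n : ℕ} (σ : Equiv.Perm (Fin n)) {m : ℕ}
    (hm : m ∈ fullCycleType σ) : m ≤ n :=
  (Multiset.single_le_sum (fun _ _ => Nat.zero_le _) m hm).trans_eq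
    (sum_fullCycleType σ)

lemma pow_dvd_lcm_iff {p a : ℕ} (hp : p.Prime) (ha : a ≠ 0) (s : Multiset ℕ)
    (hs : (0:ℕ) ∉ s) : p ^ a ∣ s.lcm ↔ ∃ m ∈ s, p ^ a ∣ m := by
  constructor
  · intro h
    induction s using Multiset.induction with
    | empty =>
      simp only [Multiset.lcm_zero] at h
      exact absurd (Nat.le_of_dvd one_pos h) (by
        have := Nat.one_lt_pow ha hp.one_lt; omega)
    | cons b t ih =>
      have hb : b ≠ 0 := fun hb0 => hs (hb0 ▸ Multiset.mem_cons_self b t)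
      have ht0 : (0:ℕ) ∉ t := fun h0 => hs (Multiset.mem_cons_of_mem h0)
      have htl : t.lcm ≠ 0 := fun h0 => ht0 ((Multiset.lcm_eq_zero_iff t).mp h0)
      rw [Multiset.lcm_cons] at h
      have hlcm : Nat.lcm b t.lcm ≠ 0 := Nat.lcm_ne_zero hb htl
      have := (Nat.Prime.pow_dvd_iff_le_factorization hp hlcm).mp h
      rw [Nat.factorization_lcm hb htl, Finsupp.sup_apply, le_sup_iff] at this
      rcases this with h1 | h2
      · exact ⟨b, Multiset.mem_cons_self b t,
          (Nat.Prime.pow_dvd_iff_le_factorization hp hb).mpr h1⟩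
      · obtain ⟨m, hm, hdvd⟩ := ih ht0 ((Nat.Prime.pow_dvd_iff_le_factorization hp htl).mpr h2)
        exact ⟨m, Multiset.mem_cons_of_mem hm, hdvd⟩
  · rintro ⟨m, hm, hd⟩
    exact hd.trans (Multiset.dvd_lcm hm)

/-- `log O_n(σ) = ψ(n) - R_n(σ)` with `ψ(n) = ∑_{k=1}^n Λ(k)` the Chebyshev
function and `R_n(σ) = ∑_{k=1}^n Λ(k) 1_{D_{n,k}(σ) = 0}`. -/
theorem log_order_chebyshev {n : ℕ} (σ : Equiv.Perm (Fin n)) :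
    Real.log ((fullCycleType σ).lcm : ℝ) =
      (∑ k ∈ Finset.Icc 1 n, ArithmeticFunction.vonMangoldt k) -
        ∑ k ∈ Finset.Icc 1 n,
          ArithmeticFunction.vonMangoldt k * (if Dnk σ k = 0 then 1 else 0) := by
  set L := (fullCycleType σ).lcm with hLdef
  have h0 : (0:ℕ) ∉ fullCycleType σ := fun h =>
    absurd (one_le_of_mem_fullCycleType σ h) (by omega)
  have hL0 : L ≠ 0 := fun h => h0 ((Multiset.lcm_eq_zero_iff _).mp h)
  -- D ≠ 0 characterization
  have hD : ∀ k, Dnk σ k ≠ 0 ↔ ∃ m ∈ fullCycleType σ, k ∣ m := by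
    intro k
    constructor
    · intro h
      obtain ⟨m, hm, hne⟩ : ∃ m ∈ Finset.Icc 1 n,
          cycleCount σ m * (if k ∣ m then 1 else 0) ≠ 0 := by
        by_contra hc
        push_neg at hc
        exact h (Finset.sum_eq_zero hc)
      refine ⟨m, ?_, ?_⟩
      · have : cycleCount σ m ≠ 0 := by
          intro h'; simp [h'] at hne
        exact Multiset.count_pos.mp (Nat.pos_of_ne_zero this)
      · by_contra hk; simp [hk] at hne
    · rintro ⟨m, hm, hk⟩
      intro h
      have hmem : m ∈ Finset.Icc 1 n :=
        Finset.mem_Icc.mpr ⟨one_le_of_mem_fullCycleType σ hm, le_of_mem_fullCycleType σ hm⟩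
      have := (Finset.sum_eq_zero_iff.mp h) m hmem
      rw [if_pos hk, mul_one] at this
      exact (Multiset.count_pos.mpr hm).ne' this
  -- key equivalence for prime powers
  have key : ∀ k, ArithmeticFunction.vonMangoldt k ≠ 0 →
      (k ∣ L ↔ k ∈ Finset.Icc 1 n ∧ Dnk σ k ≠ 0) := by
    intro k hk
    obtain ⟨p, a, hp, ha, rfl⟩ := ArithmeticFunction.vonMangoldt_ne_zero_iff.mp hk
    rw [← Nat.prime_iff] at hp
    rw [pow_dvd_lcm_iff hp ha.ne' _ h0, hD]
    constructor
    · rintro ⟨m, hm, hdvd⟩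
      refine ⟨Finset.mem_Icc.mpr ⟨Nat.one_le_pow _ _ hp.pos,
        (Nat.le_of_dvd (one_le_of_mem_fullCycleType σ hm) hdvd).trans
          (le_of_mem_fullCycleType σ hm)⟩, ⟨m, hm, hdvd⟩⟩
    · rintro ⟨_, h⟩; exact h
  -- rewrite LHS
  rw [← ArithmeticFunction.vonMangoldt_sum (n := L)]
  -- rewrite RHS as a single sum of indicators
  rw [← Finset.sum_sub_distrib]
  have hrhs : ∀ k ∈ Finset.Icc 1 n,
      ArithmeticFunction.vonMangoldt k -
        ArithmeticFunction.vonMangoldt k * (if Dnk σ k = 0 then 1 else 0) =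
      if Dnk σ k ≠ 0 then ArithmeticFunction.vonMangoldt k else 0 := by
    intro k _
    by_cases h : Dnk σ k = 0 <;> simp [h]
  rw [Finset.sum_congr rfl hrhs, ← Finset.sum_filter]
  rw [← Finset.sum_filter_ne_zero L.divisors (f := fun d => ArithmeticFunction.vonMangoldt d),
      ← Finset.sum_filter_ne_zero ((Finset.Icc 1 n).filter fun k => Dnk σ k ≠ 0)
        (f := fun d => ArithmeticFunction.vonMangoldt d)]
  congr 1
  ext d
  simp only [Finset.mem_filter, Nat.mem_divisors]
  constructor
  · rintro ⟨⟨hdL, -⟩, hΛ⟩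
    obtain ⟨h1, h2⟩ := (key d hΛ).mp hdL
    exact ⟨⟨h1, h2⟩, hΛ⟩
  · rintro ⟨⟨h1, h2⟩, hΛ⟩
    exact ⟨⟨(key d hΛ).mpr ⟨h1, h2⟩, hL0⟩, hΛ⟩
end
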